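/- For every integer m ≥ 3, the following three identities hold, where Σ_{B_1,…,B_n} denotes the sum over all partitions of {1,…,m} into n nonempty blocks B_1,…,B_n: (i) Σ_{n=1}^m (−1)^{n−1}(n−1)! Σ_{B_1,…,B_n} 1 = 0; (ii) Σ_{n=1}^m (−1)^{n−1}(n−1)! Σ_{B_1,…,B_n} Σ_{i=1}^n |B_i|² = 0; (iii) Σ_{n=1}^m (−1)^{n−1}(n−1)! Σ_{B_1,…,B_n} Σ_{i≠j} |B_i||B_j| = 0. -/

import Mathlib

open Finset TrivSqZeroExt

variable {α : Type*} [DecidableEq α] {R : Type*} [CommRing R]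

noncomputable def pw (f : ℕ → R) {s : Finset α} (P : Finpartition s) : R :=
  (-1) ^ (P.parts.card - 1) * ((P.parts.card - 1).factorial : R) * ∏ B ∈ P.parts, f B.card

noncomputable def NN (f : ℕ → R) (s : Finset α) : R := ∑ P : Finpartition s, pw f P

def fx (f : ℕ → R) : ℕ → R := fun k => if k = 0 then 1 else f k

noncomputable def vv (f : ℕ → R) {s : Finset α} (Q : Finpartition s) : R :=
  (-1) ^ (Q.parts.card - 2) * ((Q.parts.card - 2).factorial : R) * ∏ C ∈ Q.parts, f C.card

/-- remove a part from a finpartition -/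
def Finpartition.remove {s : Finset α} (Q : Finpartition s) (D : Finset α) (hD : D ∈ Q.parts) :
    Finpartition (s \ D) :=
  Q.ofSubset (Finset.erase_subset _ _) (by
    have h1 : D ⊔ (Q.parts.erase D).sup id = s := by
      have := Finset.sup_insert (b := D) (s := Q.parts.erase D) (f := id)
      rw [Finset.insert_erase hD, Q.sup_parts] at this
      exact this.symm
    have h2 : Disjoint D ((Q.parts.erase D).sup id) := by
      exact Q.supIndep (Finset.erase_subset _ _) hD (Finset.notMem_erase _ _)
    exact (h2.sdiff_eq_of_sup_eq h1).symm)

@[simp] lemma Finpartition.remove_parts {s : Finset α} (Q : Finpartition s) (D : Finset α)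
    (hD : D ∈ Q.parts) : (Q.remove D hD).parts = Q.parts.erase D := rfl

lemma sigma_fp_eq {B B' : Finset α} {Q : Finpartition B} {Q' : Finpartition B'} (h : B = B')
    (h2 : Q.parts = Q'.parts) : (⟨B, Q⟩ : Σ C : Finset α, Finpartition C) = ⟨B', Q'⟩ := by
  subst h
  exact congrArg _ (Finpartition.ext h2)

lemma sigma_pair_eq {s : Finset α} {Q Q' : Finpartition s} {D D' : Finset α} (h : Q = Q')
    (h2 : D = D') : (⟨Q, D⟩ : Σ _ : Finpartition s, Finset α) = ⟨Q', D'⟩ := by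
  subst h; subst h2; rfl

lemma keyK (f : ℕ → R) (s : Finset α) (a : α) (ha : a ∈ s) :
    ∑ B ∈ (s.powerset.filter (fun B => a ∈ B)), NN f B * fx f ((s \ B).card) = f s.card := by
  classical
  set T := s.powerset.filter (fun B => a ∈ B) with hT
  have hsT : s ∈ T := by simp [hT, ha]
  rw [← Finset.add_sum_erase _ _ hsT]
  have h0 : NN f s * fx f ((s \ s).card) = ∑ Q : Finpartition s, pw f Q := by
    simp [NN, fx]
  have h2 : ∑ B ∈ T.erase s, NN f B * fx f ((s \ B).card)
      = ∑ Q : Finpartition s, ∑ D ∈ Q.parts.filter (fun D => a ∉ D), vv f Q := by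
    have hL : ∑ B ∈ T.erase s, NN f B * fx f ((s \ B).card)
        = ∑ p ∈ (T.erase s).sigma (fun B => (Finset.univ : Finset (Finpartition B))),
            pw f p.2 * fx f ((s \ p.1).card) := by
      rw [Finset.sum_sigma]
      exact Finset.sum_congr rfl fun B _ => by rw [NN, Finset.sum_mul]
    have hR : ∑ Q : Finpartition s, ∑ D ∈ Q.parts.filter (fun D => a ∉ D), vv f Q
        = ∑ q ∈ (Finset.univ : Finset (Finpartition s)).sigma
            (fun Q => Q.parts.filter (fun D => a ∉ D)), vv f q.1 := by
      rw [Finset.sum_sigma]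
    rw [hL, hR]
    refine Finset.sum_bij' (fun p hp => ?i) (fun q hq => ?j) ?hi ?hj ?li ?ri ?val
    case i =>
      have hmem := Finset.mem_sigma.mp hp
      have h1 : p.1 ∈ T.erase s := hmem.1
      have hne : p.1 ≠ s := (Finset.mem_erase.mp h1).1
      have hsub : p.1 ⊆ s := Finset.mem_powerset.mp
        (Finset.mem_filter.mp ((Finset.mem_erase.mp h1).2)).1
      exact ⟨p.2.extend (b := s \ p.1)
        (by simpa [bot_eq_empty, Finset.sdiff_eq_empty_iff_subset] using
          fun hss => hne (Finset.Subset.antisymm hsub hss))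
        Finset.disjoint_sdiff
        (Finset.union_sdiff_of_subset hsub), s \ p.1⟩
    case j =>
      have hmem := Finset.mem_sigma.mp hq
      have hD : q.2 ∈ q.1.parts := (Finset.mem_filter.mp hmem.2).1
      exact ⟨s \ q.2, q.1.remove q.2 hD⟩
    case hi =>
      intro p hp
      have hmem := Finset.mem_sigma.mp hp
      have h1 : p.1 ∈ T.erase s := hmem.1
      have haB : a ∈ p.1 := (Finset.mem_filter.mp ((Finset.mem_erase.mp h1).2)).2
      rw [Finset.mem_sigma]
      refine ⟨Finset.mem_univ _, ?_⟩
      rw [Finset.mem_filter]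
      constructor
      · simp [Finpartition.extend]
      · simp [haB]
    case hj =>
      intro q hq
      have hmem := Finset.mem_sigma.mp hq
      have hD : q.2 ∈ q.1.parts := (Finset.mem_filter.mp hmem.2).1
      have haD : a ∉ q.2 := (Finset.mem_filter.mp hmem.2).2
      have hDs : q.2 ⊆ s := q.1.le hD
      obtain ⟨x, hx⟩ := q.1.nonempty_of_mem_parts hD
      dsimp only
      rw [Finset.mem_sigma]
      refine ⟨?_, Finset.mem_univ _⟩
      rw [Finset.mem_erase]
      constructor
      · intro hcon
        have hcon' : s \ q.2 = s := hcon
        have : x ∈ s \ q.2 := by rw [hcon']; exact hDs hx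
        simp [hx] at this
      · rw [hT, Finset.mem_filter, Finset.mem_powerset]
        exact ⟨Finset.sdiff_subset, by simp [ha, haD]⟩
    case li =>
      intro p hp
      have hmem := Finset.mem_sigma.mp hp
      have h1 : p.1 ∈ T.erase s := hmem.1
      have hne : p.1 ≠ s := (Finset.mem_erase.mp h1).1
      have hsub : p.1 ⊆ s := Finset.mem_powerset.mp
        (Finset.mem_filter.mp ((Finset.mem_erase.mp h1).2)).1
      have hnm : s \ p.1 ∉ p.2.parts := by
        intro hcon
        obtain ⟨x, hx⟩ := p.2.nonempty_of_mem_parts hcon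
        have hxB : x ∈ p.1 := p.2.le hcon hx
        simp [hxB] at hx
      dsimp only
      refine sigma_fp_eq (Finset.sdiff_sdiff_eq_self hsub) ?_
      rw [Finpartition.remove_parts, Finpartition.extend_parts, Finset.erase_insert hnm]
    case ri =>
      intro q hq
      have hmem := Finset.mem_sigma.mp hq
      have hD : q.2 ∈ q.1.parts := (Finset.mem_filter.mp hmem.2).1
      have hDs : q.2 ⊆ s := q.1.le hD
      have hdd : s \ (s \ q.2) = q.2 := Finset.sdiff_sdiff_eq_self hDs
      dsimp only
      refine sigma_pair_eq (Finpartition.ext ?_) hdd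
      rw [Finpartition.extend_parts, Finpartition.remove_parts, hdd, Finset.insert_erase hD]
    case val =>
      intro p hp
      have hmem := Finset.mem_sigma.mp hp
      have h1 : p.1 ∈ T.erase s := hmem.1
      have hne : p.1 ≠ s := (Finset.mem_erase.mp h1).1
      have hsub : p.1 ⊆ s := Finset.mem_powerset.mp
        (Finset.mem_filter.mp ((Finset.mem_erase.mp h1).2)).1
      have hnm : s \ p.1 ∉ p.2.parts := by
        intro hcon
        obtain ⟨x, hx⟩ := p.2.nonempty_of_mem_parts hcon
        have hxB : x ∈ p.1 := p.2.le hcon hx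
        simp [hxB] at hx
      have hcne : (s \ p.1).Nonempty := by
        rw [Finset.sdiff_nonempty]
        exact fun hss => hne (Finset.Subset.antisymm hsub hss)
      dsimp only
      rw [vv, Finpartition.extend_parts, Finset.card_insert_of_notMem hnm,
        Finset.prod_insert hnm]
      have hfx : fx f ((s \ p.1).card) = f ((s \ p.1).card) := by
        rw [fx]
        simp [Finset.card_ne_zero.mpr hcne]
      have harith : p.2.parts.card + 1 - 2 = p.2.parts.card - 1 := by omega
      rw [hfx, harith, pw]
      ring
  rw [h0, h2, ← Finset.sum_add_distrib]
  have h3 : ∀ Q : Finpartition s, pw f Q + ∑ D ∈ Q.parts.filter (fun D => a ∉ D), vv f Q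
      = if Q.parts.card = 1 then f s.card else 0 := by
    intro Q
    have hone : Q.parts.filter (fun D => a ∈ D) = {Q.part a} := by
      ext D
      simp only [Finset.mem_filter, Finset.mem_singleton]
      constructor
      · rintro ⟨hD, haD⟩
        exact ((Q.existsUnique_mem ha).unique ⟨hD, haD⟩ ⟨Q.part_mem.mpr ha, Q.mem_part ha⟩)
      · rintro rfl
        exact ⟨Q.part_mem.mpr ha, Q.mem_part ha⟩
    have hcardf : (Q.parts.filter (fun D => a ∉ D)).card = Q.parts.card - 1 := by
      have := Finset.card_filter_add_card_filter_not
        (s := Q.parts) (p := fun D => a ∈ D)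
      rw [hone] at this
      simp at this
      omega
    rw [Finset.sum_const, hcardf]
    have hpos : 1 ≤ Q.parts.card := by
      have : Q.parts.Nonempty := Q.parts_nonempty (by
        intro hcon
        rw [hcon] at ha
        simp at ha)
      exact Finset.card_pos.mpr this
    by_cases h1 : Q.parts.card = 1
    · obtain ⟨B, hB⟩ := Finset.card_eq_one.mp h1
      have hBs : B = s := by
        have := Q.sup_parts
        rw [hB] at this
        simpa using this
      rw [if_pos h1, h1, pw, hB, hBs]
      simp
    · obtain ⟨k, hk⟩ : ∃ k, Q.parts.card = k + 2 := ⟨Q.parts.card - 2, by omega⟩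
      rw [if_neg h1, pw, vv, hk]
      have e1 : k + 2 - 1 = k + 1 := by omega
      have e2 : k + 2 - 2 = k := by omega
      rw [e1, e2, nsmul_eq_mul]
      push_cast [Nat.factorial_succ]
      ring
  rw [Finset.sum_congr rfl fun Q _ => h3 Q]
  have hne : s ≠ (⊥ : Finset α) := by
    rw [bot_eq_empty, ← Finset.nonempty_iff_ne_empty]
    exact ⟨a, ha⟩
  rw [Finset.sum_eq_single (Finpartition.indiscrete hne)]
  · simp
  · intro Q _ hQ
    rw [if_neg]
    intro h1
    obtain ⟨B, hB⟩ := Finset.card_eq_one.mp h1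
    have hBs : B = s := by
      have := Q.sup_parts
      rw [hB] at this
      simpa using this
    exact hQ (Finpartition.ext (by rw [hB, hBs, Finpartition.indiscrete_parts]))
  · intro h
    exact absurd (Finset.mem_univ _) h

lemma count_subsets (s : Finset α) (a : α) (ha : a ∈ s) (k : ℕ) (hk : 1 ≤ k) :
    ((s.powerset.filter (fun B => a ∈ B)).filter (fun B => B.card = k)).card
      = (s.card - 1).choose (k - 1) := by
  classical
  have hbij : ((s.powerset.filter (fun B => a ∈ B)).filter (fun B => B.card = k)).card
      = ((s.erase a).powersetCard (k - 1)).card := by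
    apply Finset.card_bij (fun B _ => B.erase a)
    · intro B hB
      simp only [Finset.mem_filter, Finset.mem_powerset] at hB
      rw [Finset.mem_powersetCard]
      exact ⟨Finset.erase_subset_erase _ hB.1.1,
        by rw [Finset.card_erase_of_mem hB.1.2, hB.2]⟩
    · intro B₁ hB₁ B₂ hB₂ h
      simp only [Finset.mem_filter, Finset.mem_powerset] at hB₁ hB₂
      rw [← Finset.insert_erase hB₁.1.2, ← Finset.insert_erase hB₂.1.2, h]
    · intro C hC
      rw [Finset.mem_powersetCard] at hC
      have haC : a ∉ C := fun h => (Finset.mem_erase.mp (hC.1 h)).1 rfl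
      refine ⟨insert a C, ?_, by rw [Finset.erase_insert haC]⟩
      simp only [Finset.mem_filter, Finset.mem_powerset]
      refine ⟨⟨?_, Finset.mem_insert_self _ _⟩, ?_⟩
      · intro x hx
        rcases Finset.mem_insert.mp hx with rfl | hx
        · exact ha
        · exact Finset.mem_of_mem_erase (hC.1 hx)
      · rw [Finset.card_insert_of_notMem haC, hC.2]
        omega
  rw [hbij, Finset.card_powersetCard, Finset.card_erase_of_mem ha]

lemma NN_eq (f φ : ℕ → R)
    (hφ : ∀ m : ℕ, 1 ≤ m →
      f m = ∑ k ∈ Finset.Icc 1 m, ((m - 1).choose (k - 1) : R) * φ k * fx f (m - k)) :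
    ∀ s : Finset α, s.Nonempty → NN f s = φ s.card := by
  classical
  intro s
  induction s using Finset.strongInductionOn with
  | _ s ih =>
  intro hs
  obtain ⟨a, ha⟩ := hs
  have hK := keyK f s a ha
  set T := s.powerset.filter (fun B => a ∈ B) with hT
  have hsT : s ∈ T := by simp [hT, ha]
  rw [← Finset.add_sum_erase _ _ hsT] at hK
  simp only [Finset.sdiff_self, Finset.card_empty] at hK
  have hfx0 : fx f 0 = 1 := rfl
  rw [hfx0, mul_one] at hK
  set m := s.card with hm
  have hm1 : 1 ≤ m := Finset.card_pos.mpr ⟨a, ha⟩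
  -- rewrite the rest sum
  have hrest : ∑ B ∈ T.erase s, NN f B * fx f ((s \ B).card)
      = ∑ k ∈ Finset.Icc 1 (m - 1), ((m - 1).choose (k - 1) : R) * φ k * fx f (m - k) := by
    have hmaps : ∀ B ∈ T.erase s, B.card ∈ Finset.Icc 1 (m - 1) := by
      intro B hB
      rw [Finset.mem_erase] at hB
      simp only [hT, Finset.mem_filter, Finset.mem_powerset] at hB
      have hlt : B.card < m := Finset.card_lt_card (lt_of_le_of_ne hB.2.1 hB.1)
      have : 1 ≤ B.card := Finset.card_pos.mpr ⟨a, hB.2.2⟩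
      rw [Finset.mem_Icc]
      omega
    rw [← Finset.sum_fiberwise_of_maps_to hmaps]
    apply Finset.sum_congr rfl
    intro k hk
    rw [Finset.mem_Icc] at hk
    have hinner : ∀ B ∈ (T.erase s).filter (fun B => B.card = k),
        NN f B * fx f ((s \ B).card) = φ k * fx f (m - k) := by
      intro B hB
      simp only [Finset.mem_filter, Finset.mem_erase, hT, Finset.mem_powerset] at hB
      obtain ⟨⟨hBne, hBsub, haB⟩, hBk⟩ := hB
      have hcard : (s \ B).card = m - B.card := Finset.card_sdiff_of_subset hBsub
      have hNN : NN f B = φ B.card :=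
        ih B (lt_of_le_of_ne hBsub hBne) ⟨a, haB⟩
      rw [hNN, hcard, hBk]
    rw [Finset.sum_congr rfl hinner, Finset.sum_const]
    have hcount : ((T.erase s).filter (fun B => B.card = k)).card
        = (m - 1).choose (k - 1) := by
      have hfe : (T.erase s).filter (fun B => B.card = k) = T.filter (fun B => B.card = k) := by
        ext B
        simp only [Finset.mem_filter, Finset.mem_erase]
        constructor
        · rintro ⟨⟨_, h1⟩, h2⟩; exact ⟨h1, h2⟩
        · rintro ⟨h1, h2⟩
          refine ⟨⟨?_, h1⟩, h2⟩
          rintro rfl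
          omega
      rw [hfe, hT, count_subsets s a ha k hk.1]
    rw [hcount, nsmul_eq_mul, mul_assoc]
  rw [hrest] at hK
  have hsplit := hφ m hm1
  obtain ⟨m', hm'⟩ : ∃ m', m = m' + 1 := ⟨m - 1, by omega⟩
  rw [hm'] at hsplit hK ⊢
  rw [Finset.sum_Icc_succ_top (by omega : 1 ≤ m' + 1)] at hsplit
  simp only [Nat.add_sub_cancel, Nat.sub_self, Nat.choose_self, Nat.cast_one, one_mul,
    hfx0, mul_one] at hsplit hK
  rw [hsplit] at hK
  rw [add_comm] at hK
  exact add_left_cancel hK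

noncomputable def fD : ℕ → DualNumber ℝ := fun k => 1 + inr ((k : ℝ) ^ 2)

noncomputable def φD : ℕ → DualNumber ℝ
  | 1 => 1 + inr 1
  | 2 => inr 2
  | _ => 0

lemma φD_zero {k : ℕ} (hk : 3 ≤ k) : φD k = 0 := by
  match k, hk with
  | (n+3), _ => rfl

lemma prod_one_add_inr {ι : Type*} (t : Finset ι) (g : ι → ℝ) :
    (∏ i ∈ t, (1 + inr (g i) : DualNumber ℝ)) = 1 + inr (∑ i ∈ t, g i) := by
  induction t using Finset.cons_induction with
  | empty => simp
  | cons a t ha ih =>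
    rw [Finset.prod_cons, ih, Finset.sum_cons, add_mul, one_mul, mul_add, mul_one,
      inr_mul_inr, inr_add]
    abel

lemma fD_eq_fxD {k : ℕ} (hk : 1 ≤ k) : fx fD k = fD k := by
  have : k ≠ 0 := by omega
  simp [fx, this]

lemma hphiD (m : ℕ) (hm : 1 ≤ m) :
    fD m = ∑ k ∈ Finset.Icc 1 m, ((m - 1).choose (k - 1) : DualNumber ℝ) * φD k * fx fD (m - k) := by
  match m, hm with
  | 1, _ =>
    rw [show Finset.Icc 1 1 = {1} from rfl, Finset.sum_singleton]
    simp [φD, fx, fD]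
  | 2, _ =>
    rw [show Finset.Icc 1 2 = {1, 2} from rfl, Finset.sum_pair (by omega)]
    show fD 2 = ((1:ℕ).choose 0 : DualNumber ℝ) * φD 1 * fx fD 1
      + ((1:ℕ).choose 1 : DualNumber ℝ) * φD 2 * fx fD 0
    simp only [φD, fx, fD]
    norm_num
    ext <;> simp [fst_mul, snd_mul, show fst (2 : DualNumber ℝ) = 2 from rfl] <;> norm_num
  | (n+3), _ =>
    have hsub : ({1, 2} : Finset ℕ) ⊆ Finset.Icc 1 (n + 3) := by
      intro k hk
      simp only [Finset.mem_insert, Finset.mem_singleton] at hk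
      rcases hk with rfl | rfl <;> simp [Finset.mem_Icc]
    rw [← Finset.sum_subset hsub (fun k hk hk2 => by
      have h3 : 3 ≤ k := by
        simp only [Finset.mem_insert, Finset.mem_singleton] at hk2
        rw [Finset.mem_Icc] at hk
        omega
      rw [φD_zero h3, mul_zero, zero_mul])]
    rw [Finset.sum_pair (by omega)]
    simp only [φD]
    rw [fD_eq_fxD (show 1 ≤ n + 3 - 1 by omega), fD_eq_fxD (show 1 ≤ n + 3 - 2 by omega)]
    have e1 : n + 3 - 1 = n + 2 := rfl
    have e2 : n + 3 - 2 = n + 1 := rfl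
    rw [e1, e2]
    simp only [fD]
    ext <;> simp [fst_mul, snd_mul, show fst (2 : DualNumber ℝ) = 2 from rfl] <;> push_cast <;> ring

set_option maxHeartbeats 2000000 in
theorem statement10 (m : ℕ) (hm : 3 ≤ m) :
    (∑ n ∈ Finset.Icc 1 m, (-1 : ℝ) ^ (n - 1) * (n - 1).factorial *
        ∑ P ∈ (Finset.univ.filter
            (fun P : Finpartition (Finset.univ : Finset (Fin m)) => P.parts.card = n)),
          (1 : ℝ)) = 0 ∧
    (∑ n ∈ Finset.Icc 1 m, (-1 : ℝ) ^ (n - 1) * (n - 1).factorial *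
        ∑ P ∈ (Finset.univ.filter
            (fun P : Finpartition (Finset.univ : Finset (Fin m)) => P.parts.card = n)),
          ∑ B ∈ P.parts, ((B.card : ℝ)) ^ 2) = 0 ∧
    (∑ n ∈ Finset.Icc 1 m, (-1 : ℝ) ^ (n - 1) * (n - 1).factorial *
        ∑ P ∈ (Finset.univ.filter
            (fun P : Finpartition (Finset.univ : Finset (Fin m)) => P.parts.card = n)),
          ∑ B ∈ P.parts, ∑ B' ∈ P.parts, if B ≠ B' then (B.card : ℝ) * B'.card else 0) = 0 := by
  classical
  have hcard : (Finset.univ : Finset (Fin m)).card = m := by simp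
  have hne : (Finset.univ : Finset (Fin m)).Nonempty := ⟨⟨0, by omega⟩, Finset.mem_univ _⟩
  have hNN : NN fD (Finset.univ : Finset (Fin m)) = 0 := by
    rw [NN_eq fD φD hphiD Finset.univ hne, hcard, φD_zero hm]
  have hpw : ∀ P : Finpartition (Finset.univ : Finset (Fin m)),
      pw fD P = (-1 : DualNumber ℝ) ^ (P.parts.card - 1) *
        ((P.parts.card - 1).factorial : DualNumber ℝ) *
        (1 + inr (∑ B ∈ P.parts, ((B.card : ℝ)) ^ 2)) := by
    intro P
    rw [pw, ← prod_one_add_inr]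
    rfl
  have hfst : ∀ P : Finpartition (Finset.univ : Finset (Fin m)),
      fst (pw fD P) = (-1 : ℝ) ^ (P.parts.card - 1) * ((P.parts.card - 1).factorial : ℝ) := by
    intro P
    rw [hpw]
    simp [fst_mul]
  have hsnd : ∀ P : Finpartition (Finset.univ : Finset (Fin m)),
      snd (pw fD P) = (-1 : ℝ) ^ (P.parts.card - 1) * ((P.parts.card - 1).factorial : ℝ) *
        (∑ B ∈ P.parts, ((B.card : ℝ)) ^ 2) := by
    intro P
    rw [hpw]
    simp [snd_mul, fst_mul]
  have hfst0 : ∑ P : Finpartition (Finset.univ : Finset (Fin m)),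
      (-1 : ℝ) ^ (P.parts.card - 1) * ((P.parts.card - 1).factorial : ℝ) = 0 := by
    have : fst (NN fD (Finset.univ : Finset (Fin m))) = 0 := by rw [hNN]; rfl
    rw [NN, fst_sum] at this
    rw [← this]
    exact Finset.sum_congr rfl fun P _ => (hfst P).symm
  have hsnd0 : ∑ P : Finpartition (Finset.univ : Finset (Fin m)),
      (-1 : ℝ) ^ (P.parts.card - 1) * ((P.parts.card - 1).factorial : ℝ) *
        (∑ B ∈ P.parts, ((B.card : ℝ)) ^ 2) = 0 := by
    have : snd (NN fD (Finset.univ : Finset (Fin m))) = 0 := by rw [hNN]; rfl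
    rw [NN, snd_sum] at this
    rw [← this]
    exact Finset.sum_congr rfl fun P _ => (hsnd P).symm
  have hre : ∀ F : Finpartition (Finset.univ : Finset (Fin m)) → ℝ,
      ∑ n ∈ Finset.Icc 1 m, ∑ P ∈ (Finset.univ.filter
          (fun P : Finpartition (Finset.univ : Finset (Fin m)) => P.parts.card = n)), F P
        = ∑ P : Finpartition (Finset.univ : Finset (Fin m)), F P := by
    intro F
    apply Finset.sum_fiberwise_of_maps_to
    intro P _
    rw [Finset.mem_Icc]
    constructor
    · have h1 : P.parts.Nonempty := P.parts_nonempty (by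
        rw [bot_eq_empty]
        exact hne.ne_empty)
      exact Finset.card_pos.mpr h1
    · have := P.card_parts_le_card
      omega
  have key : ∀ G : Finpartition (Finset.univ : Finset (Fin m)) → ℝ,
      (∑ n ∈ Finset.Icc 1 m, (-1 : ℝ) ^ (n - 1) * (n - 1).factorial *
        ∑ P ∈ (Finset.univ.filter
            (fun P : Finpartition (Finset.univ : Finset (Fin m)) => P.parts.card = n)), G P)
      = ∑ P : Finpartition (Finset.univ : Finset (Fin m)),
          (-1 : ℝ) ^ (P.parts.card - 1) * ((P.parts.card - 1).factorial : ℝ) * G P := by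
    intro G
    rw [← hre (fun P => (-1 : ℝ) ^ (P.parts.card - 1) * ((P.parts.card - 1).factorial : ℝ) * G P)]
    apply Finset.sum_congr rfl
    intro n _
    rw [Finset.mul_sum]
    apply Finset.sum_congr rfl
    intro P hP
    have hPn : P.parts.card = n := (Finset.mem_filter.mp hP).2
    rw [hPn]
  have hi : (∑ n ∈ Finset.Icc 1 m, (-1 : ℝ) ^ (n - 1) * (n - 1).factorial *
        ∑ P ∈ (Finset.univ.filter
            (fun P : Finpartition (Finset.univ : Finset (Fin m)) => P.parts.card = n)),
          (1 : ℝ)) = 0 := by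
    rw [key (fun _ => (1 : ℝ))]
    simpa using hfst0
  have hii : (∑ n ∈ Finset.Icc 1 m, (-1 : ℝ) ^ (n - 1) * (n - 1).factorial *
        ∑ P ∈ (Finset.univ.filter
            (fun P : Finpartition (Finset.univ : Finset (Fin m)) => P.parts.card = n)),
          ∑ B ∈ P.parts, ((B.card : ℝ)) ^ 2) = 0 := by
    rw [key (fun P => ∑ B ∈ P.parts, ((B.card : ℝ)) ^ 2)]
    exact hsnd0
  refine ⟨hi, hii, ?_⟩
  have hpair : ∀ P : Finpartition (Finset.univ : Finset (Fin m)),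
      (∑ B ∈ P.parts, ∑ B' ∈ P.parts, if B ≠ B' then (B.card : ℝ) * B'.card else 0)
        = (m : ℝ) ^ 2 * 1 - ∑ B ∈ P.parts, ((B.card : ℝ)) ^ 2 := by
    intro P
    have hS : ∑ B ∈ P.parts, (B.card : ℝ) = (m : ℝ) := by
      rw [← Nat.cast_sum]
      rw [P.sum_card_parts, hcard]
    have hinner : ∀ B ∈ P.parts,
        (∑ B' ∈ P.parts, if B ≠ B' then (B.card : ℝ) * B'.card else 0)
          = (B.card : ℝ) * ((m : ℝ) - B.card) := by
      intro B hB
      rw [← Finset.sum_filter]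
      have hef : P.parts.filter (fun B' => B ≠ B') = P.parts.erase B := by
        ext B'
        simp only [Finset.mem_filter, Finset.mem_erase]
        constructor
        · rintro ⟨h1, h2⟩
          exact ⟨fun h => h2 h.symm, h1⟩
        · rintro ⟨h1, h2⟩
          exact ⟨h2, fun h => h1 h.symm⟩
      rw [hef, ← Finset.mul_sum, Finset.sum_erase_eq_sub hB, hS]
    rw [Finset.sum_congr rfl hinner]
    have : ∑ B ∈ P.parts, (B.card : ℝ) * ((m : ℝ) - B.card)
        = (m : ℝ) * (∑ B ∈ P.parts, (B.card : ℝ)) - ∑ B ∈ P.parts, ((B.card : ℝ)) ^ 2 := by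
      rw [Finset.mul_sum, ← Finset.sum_sub_distrib]
      apply Finset.sum_congr rfl
      intro B _
      ring
    rw [this, hS]
    ring
  calc (∑ n ∈ Finset.Icc 1 m, (-1 : ℝ) ^ (n - 1) * (n - 1).factorial *
        ∑ P ∈ (Finset.univ.filter
            (fun P : Finpartition (Finset.univ : Finset (Fin m)) => P.parts.card = n)),
          ∑ B ∈ P.parts, ∑ B' ∈ P.parts, if B ≠ B' then (B.card : ℝ) * B'.card else 0)
      = ∑ n ∈ Finset.Icc 1 m, (-1 : ℝ) ^ (n - 1) * (n - 1).factorial *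
        ∑ P ∈ (Finset.univ.filter
            (fun P : Finpartition (Finset.univ : Finset (Fin m)) => P.parts.card = n)),
          ((m : ℝ) ^ 2 * 1 - ∑ B ∈ P.parts, ((B.card : ℝ)) ^ 2) := by
        apply Finset.sum_congr rfl
        intro n _
        congr 1
        exact Finset.sum_congr rfl fun P _ => hpair P
    _ = (m : ℝ) ^ 2 * (∑ n ∈ Finset.Icc 1 m, (-1 : ℝ) ^ (n - 1) * (n - 1).factorial *
          ∑ P ∈ (Finset.univ.filter
              (fun P : Finpartition (Finset.univ : Finset (Fin m)) => P.parts.card = n)),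
            (1 : ℝ))
        - (∑ n ∈ Finset.Icc 1 m, (-1 : ℝ) ^ (n - 1) * (n - 1).factorial *
          ∑ P ∈ (Finset.univ.filter
              (fun P : Finpartition (Finset.univ : Finset (Fin m)) => P.parts.card = n)),
            ∑ B ∈ P.parts, ((B.card : ℝ)) ^ 2) := by
        rw [Finset.mul_sum, ← Finset.sum_sub_distrib]
        apply Finset.sum_congr rfl
        intro n _
        rw [Finset.sum_sub_distrib, mul_sub]
        congr 1
        rw [← Finset.mul_sum]
        ring
    _ = 0 := by rw [hi, hii]; ring
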